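/- Let Γ be a finite simplicial graph with v vertices and e edges. If Γ admits a legal system, then 1 − v/2 + e/4 ≥ 0. Moreover, if 1 − v/2 + e/4 = 0, then every state in the legal orbit induces a tree (as does its complement). -/

import Mathlib

open SimpleGraph

/-- A state `S` of a graph is *legal* if both `S` and its complement induce
nonempty connected subgraphs. -/
def Legal {V : Type*} (G : SimpleGraph V) (S : Set V) : Prop :=
  S.Nonempty ∧ Sᶜ.Nonempty ∧ (G.induce S).Connected ∧ (G.induce Sᶜ).Connected

/-- A state is *strongly legal* if it is legal and moreover every vertex of `S`
is adjacent to a vertex of the complement and vice versa. -/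
def StronglyLegal {V : Type*} (G : SimpleGraph V) (S : Set V) : Prop :=
  Legal G S ∧ (∀ v ∈ S, ∃ u ∈ Sᶜ, G.Adj v u) ∧ (∀ u ∈ Sᶜ, ∃ v ∈ S, G.Adj u v)

/-- A *system of moves*: each `m v` contains `v` and no neighbour of `v`. -/
def IsMoveSystem {V : Type*} (G : SimpleGraph V) (m : V → Set V) : Prop :=
  ∀ v, v ∈ m v ∧ ∀ u, G.Adj u v → u ∉ m v

/-- Reachability of states under the group generated by the moves, acting by
symmetric difference. -/
def Reach {V : Type*} (m : V → Set V) : Set V → Set V → Prop :=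
  Relation.ReflTransGen fun T T' => ∃ v, T' = symmDiff (m v) T

/-- The orbit of `S` under the moves is a *legal orbit*: all its states are legal. -/
def IsLegalOrbit {V : Type*} (G : SimpleGraph V) (m : V → Set V) (S : Set V) : Prop :=
  ∀ T, Reach m S T → Legal G T

/-- `Γ` has a *legal system* if some system of moves admits a legal orbit. -/
def HasLegalSystem {V : Type*} (G : SimpleGraph V) : Prop :=
  ∃ (m : V → Set V) (S : Set V), IsMoveSystem G m ∧ IsLegalOrbit G m S

open Finset


lemma conn_delete_edge {V : Type*} {G : SimpleGraph V} {v w : V}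
    (hG : G.Connected) (hR : (G \ fromEdgeSet {s(v, w)}).Reachable v w) :
    (G \ fromEdgeSet {s(v, w)}).Connected := by
  rw [connected_iff] at hG ⊢
  refine ⟨fun a b => ?_, hG.2⟩
  obtain ⟨p⟩ := hG.1 a b
  induction p with
  | nil => exact Reachable.refl _
  | @cons x y z h p ih =>
    refine Reachable.trans ?_ ih
    by_cases he : s(x, y) = s(v, w)
    · rw [Sym2.eq_iff] at he
      rcases he with ⟨rfl, rfl⟩ | ⟨rfl, rfl⟩
      · exact hR
      · exact hR.symm
    · exact Adj.reachable (by rw [sdiff_adj]; exact ⟨h, by simp [fromEdgeSet_adj, he]⟩)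

lemma conn_card_aux {V : Type*} [Fintype V] :
    ∀ (n : ℕ) (G : SimpleGraph V), G.edgeSet.ncard = n → G.Connected →
      Fintype.card V ≤ n + 1 ∧ (Fintype.card V = n + 1 → G.IsTree) := by
  intro n
  induction n using Nat.strong_induction_on with
  | _ n ih =>
    intro G hn hG
    classical
    by_cases hac : G.IsAcyclic
    · have ht : G.IsTree := ⟨hG, hac⟩
      have : Fintype G.edgeSet := Fintype.ofFinite _
      have hc := ht.card_edgeFinset
      have he : G.edgeFinset.card = n := by
        rw [← hn, Set.ncard_eq_toFinset_card']; congr 1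
      exact ⟨by omega, fun _ => ht⟩
    · obtain ⟨v, w, hadj, hnb⟩ : ∃ v w, G.Adj v w ∧ ¬G.IsBridge s(v, w) := by
        by_contra h
        push_neg at h
        exact hac (isAcyclic_iff_forall_adj_isBridge.mpr fun v w hvw => h v w hvw)
      have hR : (G \ fromEdgeSet {s(v, w)}).Reachable v w := by
        rw [isBridge_iff] at hnb; push_neg at hnb; exact hnb
      have hc' := conn_delete_edge hG hR
      have hes : (G \ fromEdgeSet {s(v, w)}).edgeSet = G.edgeSet \ {s(v, w)} := by
        rw [edgeSet_sdiff, edgeSet_fromEdgeSet, edgeSet_sdiff_sdiff_isDiag]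
      have hmem : s(v, w) ∈ G.edgeSet := hadj
      have hpos : 1 ≤ n := by
        rw [← hn]
        exact (Set.ncard_pos (Set.toFinite _)).mpr ⟨_, hmem⟩
      have hcard' : (G \ fromEdgeSet {s(v, w)}).edgeSet.ncard = n - 1 := by
        rw [hes, Set.ncard_diff_singleton_of_mem hmem, hn]
      obtain ⟨h1, _⟩ := ih (n - 1) (by omega) _ hcard' hc'
      exact ⟨by omega, fun h => absurd h (by omega)⟩


lemma induce_edgeSet_ncard {V : Type*} [Fintype V] [DecidableEq V] (G : SimpleGraph V)
    [DecidableRel G.Adj] (T : Set V) [DecidablePred (· ∈ T)] :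
    (G.induce T).edgeSet.ncard
      = (G.edgeFinset.filter fun e => ∀ x ∈ e, x ∈ T).card := by
  classical
  rw [← Set.ncard_coe_finset]
  rw [← Set.ncard_image_of_injective (G.induce T).edgeSet
        (Sym2.map.injective (Subtype.val_injective))]
  congr 1
  ext e
  induction e with
  | _ a b =>
    simp only [Set.mem_image, coe_filter, Set.mem_setOf_eq, mem_edgeFinset, mem_edgeSet]
    constructor
    · rintro ⟨e', he', heq⟩
      induction e' with
      | _ c d =>
        simp only [mem_edgeSet, comap_adj, Function.Embedding.coe_subtype] at he'
        rw [Sym2.map_pair_eq, Sym2.eq_iff] at heq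
        rcases heq with ⟨rfl, rfl⟩ | ⟨rfl, rfl⟩
        · refine ⟨he', ?_⟩
          intro x hx
          rw [Sym2.mem_iff] at hx
          rcases hx with rfl | rfl
          · exact c.2
          · exact d.2
        · refine ⟨he'.symm, ?_⟩
          intro x hx
          rw [Sym2.mem_iff] at hx
          rcases hx with rfl | rfl
          · exact d.2
          · exact c.2
    · rintro ⟨hadj, hT⟩
      have ha : a ∈ T := hT a (Sym2.mem_mk_left a b)
      have hb : b ∈ T := hT b (Sym2.mem_mk_right a b)
      refine ⟨s(⟨a, ha⟩, ⟨b, hb⟩), ?_, by rw [Sym2.map_pair_eq]⟩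
      simpa only [mem_edgeSet, comap_adj, Function.Embedding.coe_subtype] using hadj

lemma conn_count {V : Type*} [Fintype V] [DecidableEq V] (G : SimpleGraph V)
    [DecidableRel G.Adj] (A : Set V) [DecidablePred (· ∈ A)]
    (hA : (G.induce A).Connected) :
    A.ncard ≤ (G.edgeFinset.filter fun e => ∀ x ∈ e, x ∈ A).card + 1 ∧
    (A.ncard = (G.edgeFinset.filter fun e => ∀ x ∈ e, x ∈ A).card + 1 →
      (G.induce A).IsTree) := by
  have h1 := conn_card_aux ((G.induce A).edgeSet.ncard) (G.induce A) rfl hA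
  rw [induce_edgeSet_ncard] at h1
  rwa [show Fintype.card ↥A = A.ncard from by
    rw [← Nat.card_eq_fintype_card, Nat.card_coe_set_eq]] at h1

/-- if a finite graph with `v` vertices and `e` edges admits a
legal system then `1 − v/2 + e/4 ≥ 0`, and in case of equality every state of
the legal orbit (and its complement) induces a tree. -/
theorem legal_system_curvature_nonneg
    {V : Type*} [Fintype V] [DecidableEq V] (G : SimpleGraph V) [DecidableRel G.Adj]
    (m : V → Set V) (S₀ : Set V)
    (hm : IsMoveSystem G m) (ho : IsLegalOrbit G m S₀) :
    0 ≤ 1 - (Fintype.card V : ℚ) / 2 + (G.edgeFinset.card : ℚ) / 4 ∧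
    (1 - (Fintype.card V : ℚ) / 2 + (G.edgeFinset.card : ℚ) / 4 = 0 →
      ∀ T, Reach m S₀ T → (G.induce T).IsTree ∧ (G.induce Tᶜ).IsTree) := by
  classical
  obtain ⟨O, hmemO⟩ : ∃ O : Finset (Set V), ∀ T, T ∈ O ↔ Reach m S₀ T :=
    ⟨Finset.univ.filter (Reach m S₀ ·), fun T => by simp⟩
  have hstep : ∀ (x : V) (T : Set V), T ∈ O → symmDiff (m x) T ∈ O := fun x T hT =>
    (hmemO _).mpr (Relation.ReflTransGen.tail ((hmemO _).mp hT) ⟨x, rfl⟩)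
  have hS₀ : S₀ ∈ O := (hmemO _).mpr Relation.ReflTransGen.refl
  have hOpos : 0 < O.card := Finset.card_pos.mpr ⟨S₀, hS₀⟩
  -- key bijection principle
  have key : ∀ (x : V) (P P' : Set V → Prop) (dP : DecidablePred P) (dP' : DecidablePred P'),
      (∀ T, P T ↔ P' (symmDiff (m x) T)) →
      (@Finset.filter _ P dP O).card = (@Finset.filter _ P' dP' O).card := by
    intro x P P' dP dP' h
    refine Finset.card_bij' (fun T _ => symmDiff (m x) T) (fun T _ => symmDiff (m x) T)
      ?_ ?_ ?_ ?_
    · intro T hT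
      rw [Finset.mem_filter] at hT ⊢
      exact ⟨hstep x T hT.1, (h T).mp hT.2⟩
    · intro T hT
      rw [Finset.mem_filter] at hT ⊢
      refine ⟨hstep x T hT.1, ?_⟩
      have h2 := h (symmDiff (m x) T)
      rw [symmDiff_symmDiff_cancel_left] at h2
      exact h2.mpr hT.2
    · intro T _; exact symmDiff_symmDiff_cancel_left _ _
    · intro T _; exact symmDiff_symmDiff_cancel_left _ _
  -- quarter counting for edges
  have hq : ∀ {u v : V}, G.Adj u v →
      4 * (O.filter fun T => u ∈ T ∧ v ∈ T).card = O.card ∧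
      4 * (O.filter fun T => u ∉ T ∧ v ∉ T).card = O.card := by
    intro u v huv
    have hu : u ∈ m u := (hm u).1
    have hv : v ∈ m v := (hm v).1
    have huv' : u ∉ m v := (hm v).2 u huv
    have hvu : v ∉ m u := (hm u).2 v huv.symm
    have fu : ∀ T : Set V, u ∈ symmDiff (m u) T ↔ u ∉ T := fun T => by
      simp [Set.mem_symmDiff, hu]
    have fv : ∀ T : Set V, v ∈ symmDiff (m u) T ↔ v ∈ T := fun T => by
      simp [Set.mem_symmDiff, hvu]
    have gu : ∀ T : Set V, u ∈ symmDiff (m v) T ↔ u ∈ T := fun T => by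
      simp [Set.mem_symmDiff, huv']
    have gv : ∀ T : Set V, v ∈ symmDiff (m v) T ↔ v ∉ T := fun T => by
      simp [Set.mem_symmDiff, hv]
    have e1 : (O.filter fun T => u ∈ T ∧ v ∈ T).card
        = (O.filter fun T => ¬u ∈ T ∧ v ∈ T).card :=
      key u _ _ _ _ (fun T => by rw [fu, fv]; tauto)
    have e2 : (O.filter fun T => u ∈ T ∧ ¬v ∈ T).card
        = (O.filter fun T => ¬u ∈ T ∧ ¬v ∈ T).card :=
      key u _ _ _ _ (fun T => by rw [fu, fv]; tauto)
    have e3 : (O.filter fun T => u ∈ T ∧ v ∈ T).card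
        = (O.filter fun T => u ∈ T ∧ ¬v ∈ T).card :=
      key v _ _ _ _ (fun T => by rw [gu, gv]; tauto)
    have s1 := Finset.card_filter_add_card_filter_not (s := O)
      (p := fun T => u ∈ T)
    have s2 := Finset.card_filter_add_card_filter_not
      (s := O.filter fun T => u ∈ T) (p := fun T => v ∈ T)
    have s3 := Finset.card_filter_add_card_filter_not
      (s := O.filter fun T => ¬u ∈ T) (p := fun T => v ∈ T)
    rw [Finset.filter_filter, Finset.filter_filter] at s2 s3
    constructor <;> omega
  -- per-edge orbit counts
  have hedge1 : ∀ e ∈ G.edgeFinset, 4 * (O.filter fun T => ∀ x ∈ e, x ∈ T).card = O.card := by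
    intro e he
    induction e with
    | _ u v =>
      have huv : G.Adj u v := by rwa [mem_edgeFinset, mem_edgeSet] at he
      have hrw : (O.filter fun T => ∀ x ∈ s(u, v), x ∈ T)
          = O.filter fun T => u ∈ T ∧ v ∈ T := by
        apply Finset.filter_congr
        intro T _
        constructor
        · intro h
          exact ⟨h u (Sym2.mem_mk_left u v), h v (Sym2.mem_mk_right u v)⟩
        · rintro ⟨h1, h2⟩ x hx
          rcases Sym2.mem_iff.mp hx with rfl | rfl
          · exact h1
          · exact h2
      rw [hrw]
      exact (hq huv).1
  have hedge2 : ∀ e ∈ G.edgeFinset, 4 * (O.filter fun T => ∀ x ∈ e, x ∈ Tᶜ).card = O.card := by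
    intro e he
    induction e with
    | _ u v =>
      have huv : G.Adj u v := by rwa [mem_edgeFinset, mem_edgeSet] at he
      have hrw : (O.filter fun T => ∀ x ∈ s(u, v), x ∈ Tᶜ)
          = O.filter fun T => u ∉ T ∧ v ∉ T := by
        apply Finset.filter_congr
        intro T _
        constructor
        · intro h
          exact ⟨h u (Sym2.mem_mk_left u v), h v (Sym2.mem_mk_right u v)⟩
        · rintro ⟨h1, h2⟩ x hx
          rcases Sym2.mem_iff.mp hx with rfl | rfl
          · exact h1
          · exact h2
      rw [hrw]
      exact (hq huv).2
  -- double counting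
  have hsum1 : 4 * ∑ T ∈ O, (G.edgeFinset.filter fun e => ∀ x ∈ e, x ∈ T).card
      = O.card * G.edgeFinset.card := by
    have h1 : ∑ T ∈ O, (G.edgeFinset.filter fun e => ∀ x ∈ e, x ∈ T).card
        = ∑ e ∈ G.edgeFinset, (O.filter fun T => ∀ x ∈ e, x ∈ T).card := by
      simp only [Finset.card_filter]
      exact Finset.sum_comm
    rw [h1, Finset.mul_sum, Finset.sum_congr rfl hedge1, Finset.sum_const, smul_eq_mul,
      mul_comm]
  have hsum2 : 4 * ∑ T ∈ O, (G.edgeFinset.filter fun e => ∀ x ∈ e, x ∈ Tᶜ).card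
      = O.card * G.edgeFinset.card := by
    have h1 : ∑ T ∈ O, (G.edgeFinset.filter fun e => ∀ x ∈ e, x ∈ Tᶜ).card
        = ∑ e ∈ G.edgeFinset, (O.filter fun T => ∀ x ∈ e, x ∈ Tᶜ).card := by
      simp only [Finset.card_filter]
      exact Finset.sum_comm
    rw [h1, Finset.mul_sum, Finset.sum_congr rfl hedge2, Finset.sum_const, smul_eq_mul,
      mul_comm]
  -- per-state bounds
  have hcardVT : ∀ T : Set V, T.ncard + Tᶜ.ncard = Fintype.card V := fun T => by
    rw [← Nat.card_eq_fintype_card]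
    exact Set.ncard_add_ncard_compl T
  have hle : ∀ T ∈ O, Fintype.card V ≤
      (G.edgeFinset.filter fun e => ∀ x ∈ e, x ∈ T).card +
      (G.edgeFinset.filter fun e => ∀ x ∈ e, x ∈ Tᶜ).card + 2 := by
    intro T hT
    have hL := ho T ((hmemO T).mp hT)
    have h1 := (conn_count G T hL.2.2.1).1
    have h2 := (conn_count G Tᶜ hL.2.2.2).1
    have h3 := hcardVT T
    omega
  have hsumle : O.card * Fintype.card V ≤
      (∑ T ∈ O, (G.edgeFinset.filter fun e => ∀ x ∈ e, x ∈ T).card) +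
      (∑ T ∈ O, (G.edgeFinset.filter fun e => ∀ x ∈ e, x ∈ Tᶜ).card) + 2 * O.card := by
    calc O.card * Fintype.card V = ∑ _T ∈ O, Fintype.card V := by
          rw [Finset.sum_const, smul_eq_mul, mul_comm]
      _ ≤ ∑ T ∈ O, ((G.edgeFinset.filter fun e => ∀ x ∈ e, x ∈ T).card +
            (G.edgeFinset.filter fun e => ∀ x ∈ e, x ∈ Tᶜ).card + 2) :=
          Finset.sum_le_sum hle
      _ = _ := by
          rw [Finset.sum_add_distrib, Finset.sum_add_distrib, Finset.sum_const, smul_eq_mul]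
          ring
  have hmain : 4 * Fintype.card V ≤ 2 * G.edgeFinset.card + 8 := by
    have h5 : O.card * (4 * Fintype.card V) ≤ O.card * (2 * G.edgeFinset.card + 8) := by
      calc O.card * (4 * Fintype.card V) = 4 * (O.card * Fintype.card V) := by ring
        _ ≤ 4 * ((∑ T ∈ O, (G.edgeFinset.filter fun e => ∀ x ∈ e, x ∈ T).card) +
              (∑ T ∈ O, (G.edgeFinset.filter fun e => ∀ x ∈ e, x ∈ Tᶜ).card) + 2 * O.card) :=
            Nat.mul_le_mul_left 4 hsumle
        _ = 4 * (∑ T ∈ O, (G.edgeFinset.filter fun e => ∀ x ∈ e, x ∈ T).card) +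
              4 * (∑ T ∈ O, (G.edgeFinset.filter fun e => ∀ x ∈ e, x ∈ Tᶜ).card) +
              8 * O.card := by ring
        _ = O.card * G.edgeFinset.card + O.card * G.edgeFinset.card + 8 * O.card := by
            rw [hsum1, hsum2]
        _ = O.card * (2 * G.edgeFinset.card + 8) := by ring
    exact Nat.le_of_mul_le_mul_left h5 hOpos
  constructor
  · have h6 : (4 * Fintype.card V : ℚ) ≤ 2 * G.edgeFinset.card + 8 := by
      exact_mod_cast hmain
    linarith
  · intro heq T hreach
    have hTO : T ∈ O := (hmemO T).mpr hreach
    have hnat : 2 * G.edgeFinset.card + 8 = 4 * Fintype.card V := by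
      have hcast : ((2 * G.edgeFinset.card + 8 : ℕ) : ℚ) = ((4 * Fintype.card V : ℕ) : ℚ) := by
        push_cast
        linarith
      exact_mod_cast hcast
    have hsumeq : ∑ _T ∈ O, Fintype.card V =
        ∑ T ∈ O, ((G.edgeFinset.filter fun e => ∀ x ∈ e, x ∈ T).card +
          (G.edgeFinset.filter fun e => ∀ x ∈ e, x ∈ Tᶜ).card + 2) := by
      have h4 : 4 * (∑ T ∈ O, ((G.edgeFinset.filter fun e => ∀ x ∈ e, x ∈ T).card +
          (G.edgeFinset.filter fun e => ∀ x ∈ e, x ∈ Tᶜ).card + 2))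
          = 4 * ∑ _T ∈ O, Fintype.card V := by
        rw [Finset.sum_add_distrib, Finset.sum_add_distrib, Finset.sum_const, smul_eq_mul,
          Finset.sum_const, smul_eq_mul]
        calc 4 * ((∑ T ∈ O, (G.edgeFinset.filter fun e => ∀ x ∈ e, x ∈ T).card) +
              (∑ T ∈ O, (G.edgeFinset.filter fun e => ∀ x ∈ e, x ∈ Tᶜ).card) + O.card * 2)
            = 4 * (∑ T ∈ O, (G.edgeFinset.filter fun e => ∀ x ∈ e, x ∈ T).card) +
              4 * (∑ T ∈ O, (G.edgeFinset.filter fun e => ∀ x ∈ e, x ∈ Tᶜ).card) +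
              8 * O.card := by ring
          _ = O.card * G.edgeFinset.card + O.card * G.edgeFinset.card + 8 * O.card := by
              rw [hsum1, hsum2]
          _ = O.card * (2 * G.edgeFinset.card + 8) := by ring
          _ = O.card * (4 * Fintype.card V) := by rw [hnat]
          _ = 4 * (O.card * Fintype.card V) := by ring
      exact (Nat.eq_of_mul_eq_mul_left (by norm_num) h4).symm
    have hallT := (Finset.sum_eq_sum_iff_of_le hle).mp hsumeq T hTO
    have hL := ho T hreach
    obtain ⟨ha1, ha2⟩ := conn_count G T hL.2.2.1
    obtain ⟨hb1, hb2⟩ := conn_count G Tᶜ hL.2.2.2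
    have hc := hcardVT T
    refine ⟨ha2 ?_, hb2 ?_⟩ <;> omega
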